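/- Let P be a Borel probability measure on ℝ^n, let T : ℝ^n → (ℝ^D)^Q be Borel measurable with coordinate maps T^q : ℝ^n → ℝ^D, let e : Fin K → ℝ^D be a codebook, and for each q = 1, …, Q let π^q be a probability vector on Fin K, with P_{e,π^q} = ∑_k π^q_k δ_{e k}. With f_dz(z, z') = (1/Q) ∑_q ‖z^q − z'^q‖ on (ℝ^D)^Q, the infimum, over all Borel probability measures γ on (ℝ^D)^Q that are supported on codeword tuples {e k : k ∈ Fin K}^Q and whose q-th coordinate marginal equals P_{e,π^q} for every q, of W_{f_dz}(T#P, γ), is at most (1/Q) ∑_{q=1}^{Q} W_{dist}(T^q#P, P_{e,π^q}), where dist is the Euclidean distance on ℝ^D. -/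

import Mathlib

open MeasureTheory ProbabilityTheory ENNReal

/-- Kantorovich cost `W_c(μ, ν)`: the infimum of `∫ c(x, y) dπ(x, y)` over all
probability measures `π` on the product whose first marginal is `μ` and whose
second marginal is `ν`. -/
noncomputable def Wcost {X Y : Type*} [MeasurableSpace X] [MeasurableSpace Y]
    (c : X → Y → ℝ≥0∞) (μ : Measure X) (ν : Measure Y) : ℝ≥0∞ :=
  ⨅ (π : Measure (X × Y)) (_ : IsProbabilityMeasure π)
    (_ : π.fst = μ) (_ : π.snd = ν), ∫⁻ p, c p.1 p.2 ∂π

/-- The discrete codebook measure `P_{e,π} = ∑ k, π k • δ_{e k}` on `ℝ^D`. -/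
noncomputable def codebookMeasure {K D : ℕ} (e : Fin K → EuclideanSpace ℝ (Fin D))
    (w : Fin K → ℝ) : Measure (EuclideanSpace ℝ (Fin D)) :=
  ∑ k, (ENNReal.ofReal (w k)) • Measure.dirac (e k)

/-- The latent cost `f_dz(z, z') = (1/Q) ∑ q, ‖z q − z' q‖` on `(ℝ^D)^Q`,
valued in `ℝ≥0∞`. -/
noncomputable def fdz {Q D : ℕ} (z z' : Fin Q → EuclideanSpace ℝ (Fin D)) : ℝ≥0∞ :=
  (∑ q, ENNReal.ofReal ‖z q - z' q‖) / (Q : ℝ≥0∞)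

open Set in
lemma aux_pi_map_eval {ι : Type*} [Fintype ι] {X : ι → Type*} [∀ i, MeasurableSpace (X i)]
    (ν : ∀ i, Measure (X i)) [∀ i, IsProbabilityMeasure (ν i)] (q : ι) :
    (Measure.pi ν).map (fun z => z q) = ν q := by
  classical
  ext s hs
  rw [Measure.map_apply (measurable_pi_apply q) hs]
  have : (fun z : ∀ i, X i => z q) ⁻¹' s = Set.pi univ (Function.update (fun i => univ) q s) := by
    simpa using Set.eval_preimage (i := q) (s := s)
  rw [this, Measure.pi_pi]
  rw [Finset.prod_eq_single q]
  · simp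
  · intro j _ hj; simp [Function.update_of_ne hj]
  · simp

open Set in
lemma aux_meas_pi {ι : Type*} [Fintype ι] {X : ι → Type*} [∀ i, MeasurableSpace (X i)]
    (κ : ∀ i, Kernel (X i) (X i)) [∀ i, IsMarkovKernel (κ i)] :
    Measurable (fun z : ∀ i, X i => Measure.pi (fun i => κ i (z i))) := by
  apply Measure.measurable_of_measurable_coe
  intro s hs
  refine MeasurableSpace.induction_on_inter
    (C := fun s _ => Measurable fun z : ∀ i, X i => Measure.pi (fun i => κ i (z i)) s)
    generateFrom_pi.symm isPiSystem_pi (by simp) ?_ ?_ ?_ s hs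
  · rintro _ ⟨t, ht, rfl⟩
    simp_rw [Measure.pi_pi]
    exact Finset.measurable_prod _ fun i _ =>
      (Kernel.measurable_coe (κ i) (ht i (Set.mem_univ i))).comp (measurable_pi_apply i)
  · intro t htm ht
    have h : ∀ z : ∀ i, X i, Measure.pi (fun i => κ i (z i)) tᶜ
        = 1 - Measure.pi (fun i => κ i (z i)) t := by
      intro z
      rw [measure_compl htm (measure_ne_top _ _), measure_univ]
    simp_rw [h]
    exact measurable_const.sub ht
  · intro f hd hfm hf
    simp_rw [measure_iUnion hd hfm]
    exact Measurable.ennreal_tsum hf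

open Set in
lemma key_lemma {K Q D n : ℕ}
    (P : Measure (EuclideanSpace ℝ (Fin n))) [IsProbabilityMeasure P]
    (T : EuclideanSpace ℝ (Fin n) → (Fin Q → EuclideanSpace ℝ (Fin D)))
    (hT : Measurable T)
    (e : Fin K → EuclideanSpace ℝ (Fin D)) (w : Fin Q → Fin K → ℝ)
    (π : Fin Q → Measure (EuclideanSpace ℝ (Fin D) × EuclideanSpace ℝ (Fin D)))
    (hprob : ∀ q, IsProbabilityMeasure (π q))
    (hfst : ∀ q, (π q).fst = P.map (fun x => T x q))
    (hsnd : ∀ q, (π q).snd = codebookMeasure e (w q)) :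
    (⨅ (γ : Measure (Fin Q → EuclideanSpace ℝ (Fin D)))
       (_ : IsProbabilityMeasure γ)
       (_ : γ {z | ∀ q, ∃ k, z q = e k} = 1)
       (_ : ∀ q, γ.map (fun z => z q) = codebookMeasure e (w q)),
       Wcost fdz (P.map T) γ)
    ≤ (∑ q, ∫⁻ p, edist p.1 p.2 ∂(π q)) / (Q : ℝ≥0∞) := by
  classical
  haveI := hprob
  set μ : Measure (Fin Q → EuclideanSpace ℝ (Fin D)) := P.map T with hμ
  haveI : IsProbabilityMeasure μ := Measure.isProbabilityMeasure_map (μ := P) hT.aemeasurable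
  set κ : ∀ _ : Fin Q, Kernel (EuclideanSpace ℝ (Fin D)) (EuclideanSpace ℝ (Fin D)) :=
    fun q => (π q).condKernel with hκ
  set κpi : Kernel (Fin Q → EuclideanSpace ℝ (Fin D)) (Fin Q → EuclideanSpace ℝ (Fin D)) :=
    ⟨fun z => Measure.pi fun q => κ q (z q), aux_meas_pi κ⟩ with hκpi
  have κpi_apply : ∀ z, κpi z = Measure.pi fun q => κ q (z q) := fun z => rfl
  haveI : IsMarkovKernel κpi := ⟨fun z => by rw [κpi_apply]; infer_instance⟩
  set Pl : Measure ((Fin Q → EuclideanSpace ℝ (Fin D)) × (Fin Q → EuclideanSpace ℝ (Fin D))) :=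
    μ ⊗ₘ κpi with hPl
  haveI : IsProbabilityMeasure Pl := by rw [hPl]; infer_instance
  have hμq : ∀ q, μ.map (fun z => z q) = (π q).fst := by
    intro q
    rw [hμ, Measure.map_map (measurable_pi_apply q) hT, hfst q]
    rfl
  have hslice : ∀ (q : Fin Q) (z : Fin Q → EuclideanSpace ℝ (Fin D)) (s : Set (EuclideanSpace ℝ (Fin D))),
      MeasurableSet s →
      κpi z ((fun z' : Fin Q → EuclideanSpace ℝ (Fin D) => z' q) ⁻¹' s) = κ q (z q) s := by
    intro q z s hs
    rw [κpi_apply, ← Measure.map_apply (measurable_pi_apply q) hs, aux_pi_map_eval]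
  set γ : Measure (Fin Q → EuclideanSpace ℝ (Fin D)) := Pl.snd with hγ
  haveI : IsProbabilityMeasure γ := by rw [hγ]; infer_instance
  have hmarg : ∀ q, γ.map (fun z => z q) = codebookMeasure e (w q) := by
    intro q
    ext s hs
    rw [hγ, Measure.snd, Measure.map_map (measurable_pi_apply q) measurable_snd,
      Measure.map_apply ((measurable_pi_apply q).comp measurable_snd) hs, hPl,
      Measure.compProd_apply (((measurable_pi_apply q).comp measurable_snd) hs)]
    have h2 : ∫⁻ z, κpi z (Prod.mk z ⁻¹' (((fun z' : Fin Q → EuclideanSpace ℝ (Fin D) => z' q) ∘ Prod.snd) ⁻¹' s)) ∂μ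
        = ∫⁻ z, κ q (z q) s ∂μ := lintegral_congr fun z => hslice q z s hs
    rw [h2]
    have h3 : ∫⁻ z, κ q (z q) s ∂μ = ∫⁻ y, κ q y s ∂((π q).fst) := by
      rw [← hμq q, lintegral_map (Kernel.measurable_coe (κ q) hs) (measurable_pi_apply q)]
    rw [h3]
    have h4 : ∫⁻ y, κ q y s ∂((π q).fst) = ((π q).fst ⊗ₘ κ q) (univ ×ˢ s) := by
      rw [Measure.compProd_apply (MeasurableSet.univ.prod hs)]
      congr 1
      ext y
      simp
    rw [h4, hκ, (π q).disintegrate _, ← hsnd q, Measure.snd_apply hs]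
    congr 1
    ext p
    simp
  -- support of γ
  have hCm : MeasurableSet {x : EuclideanSpace ℝ (Fin D) | ∃ k, x = e k} := by
    have : {x : EuclideanSpace ℝ (Fin D) | ∃ k, x = e k} = ⋃ k, {e k} := by
      ext x
      simp only [Set.mem_setOf_eq, Set.mem_iUnion, Set.mem_singleton_iff]
    rw [this]; exact MeasurableSet.iUnion fun k => measurableSet_singleton _
  have hSm : MeasurableSet {z : Fin Q → EuclideanSpace ℝ (Fin D) | ∀ q, ∃ k, z q = e k} := by
    have : {z : Fin Q → EuclideanSpace ℝ (Fin D) | ∀ q, ∃ k, z q = e k}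
        = ⋂ q, (fun z : Fin Q → EuclideanSpace ℝ (Fin D) => z q) ⁻¹' {x | ∃ k, x = e k} := by
      ext z; simp
    rw [this]; exact MeasurableSet.iInter fun q => (measurable_pi_apply q) hCm
  have hmargzero : ∀ q : Fin Q,
      γ ((fun z : Fin Q → EuclideanSpace ℝ (Fin D) => z q) ⁻¹' {x | ∃ k, x = e k}ᶜ) = 0 := by
    intro q
    rw [← Measure.map_apply (measurable_pi_apply q) hCm.compl, hmarg q, codebookMeasure,
      Measure.finset_sum_apply]
    refine Finset.sum_eq_zero fun k _ => ?_
    rw [Measure.smul_apply, Measure.dirac_apply' _ hCm.compl]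
    have : e k ∉ {x : EuclideanSpace ℝ (Fin D) | ∃ k, x = e k}ᶜ := by simp
    rw [Set.indicator_of_notMem this]
    simp
  have hsupp : γ {z | ∀ q, ∃ k, z q = e k} = 1 := by
    rw [← prob_compl_eq_zero_iff₀ hSm.nullMeasurableSet]
    refine le_antisymm ?_ zero_le
    have hsub : {z : Fin Q → EuclideanSpace ℝ (Fin D) | ∀ q, ∃ k, z q = e k}ᶜ
        ⊆ ⋃ q, (fun z : Fin Q → EuclideanSpace ℝ (Fin D) => z q) ⁻¹' {x | ∃ k, x = e k}ᶜ := by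
      intro z hz
      simp only [Set.mem_compl_iff, Set.mem_setOf_eq, not_forall] at hz
      obtain ⟨q, hq⟩ := hz
      exact Set.mem_iUnion.2 ⟨q, by simpa using hq⟩
    refine le_trans (measure_mono hsub) (le_trans (measure_iUnion_le _) ?_)
    rw [tsum_fintype]
    exact le_of_eq (Finset.sum_eq_zero fun q _ => hmargzero q)
  -- cost of Pl
  have hedist : Measurable (fun p : EuclideanSpace ℝ (Fin D) × EuclideanSpace ℝ (Fin D) =>
      ENNReal.ofReal ‖p.1 - p.2‖) :=
    (measurable_fst.sub measurable_snd).norm.ennreal_ofReal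
  have hterm : ∀ q : Fin Q,
      ∫⁻ p, ENNReal.ofReal ‖p.1 q - p.2 q‖ ∂Pl = ∫⁻ p, edist p.1 p.2 ∂(π q) := by
    intro q
    have hfmeas : Measurable (fun p : (Fin Q → EuclideanSpace ℝ (Fin D)) × (Fin Q → EuclideanSpace ℝ (Fin D)) =>
        ENNReal.ofReal ‖p.1 q - p.2 q‖) :=
      (((measurable_pi_apply q).comp measurable_fst).sub
        ((measurable_pi_apply q).comp measurable_snd)).norm.ennreal_ofReal
    rw [hPl, Measure.lintegral_compProd hfmeas]
    have hinner : ∀ z : Fin Q → EuclideanSpace ℝ (Fin D),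
        ∫⁻ z', ENNReal.ofReal ‖z q - z' q‖ ∂(κpi z)
          = ∫⁻ x, ENNReal.ofReal ‖z q - x‖ ∂(κ q (z q)) := by
      intro z
      have hg : Measurable fun x : EuclideanSpace ℝ (Fin D) => ENNReal.ofReal ‖z q - x‖ :=
        ((measurable_const.sub measurable_id).norm).ennreal_ofReal
      rw [κpi_apply, ← aux_pi_map_eval (fun i => κ i (z i)) q,
        lintegral_map hg (measurable_pi_apply q)]
    simp_rw [hinner]
    have Fmeas : Measurable (fun y : EuclideanSpace ℝ (Fin D) =>
        ∫⁻ x, ENNReal.ofReal ‖y - x‖ ∂(κ q y)) :=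
      Measurable.lintegral_kernel_prod_right
        ((measurable_fst.sub measurable_snd).norm.ennreal_ofReal)
    have houter : ∫⁻ z, (∫⁻ x, ENNReal.ofReal ‖z q - x‖ ∂(κ q (z q))) ∂μ
        = ∫⁻ y, (∫⁻ x, ENNReal.ofReal ‖y - x‖ ∂(κ q y)) ∂((π q).fst) := by
      rw [← hμq q, lintegral_map Fmeas (measurable_pi_apply q)]
    rw [houter, ← Measure.lintegral_compProd hedist, hκ, (π q).disintegrate _]
    refine lintegral_congr fun p => ?_
    rw [edist_dist, dist_eq_norm]
  have hcost : ∫⁻ p, fdz p.1 p.2 ∂Pl = (∑ q, ∫⁻ p, edist p.1 p.2 ∂(π q)) / (Q : ℝ≥0∞) := by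
    have hm : ∀ q : Fin Q, Measurable fun p :
        (Fin Q → EuclideanSpace ℝ (Fin D)) × (Fin Q → EuclideanSpace ℝ (Fin D)) =>
        ENNReal.ofReal ‖p.1 q - p.2 q‖ := fun q =>
      (((measurable_pi_apply q).comp measurable_fst).sub
        ((measurable_pi_apply q).comp measurable_snd)).norm.ennreal_ofReal
    simp_rw [fdz, div_eq_mul_inv]
    rw [lintegral_mul_const _ (Finset.measurable_sum _ fun q _ => hm q),
      lintegral_finset_sum _ fun q _ => hm q]
    simp_rw [hterm]
  -- conclude
  have hPlfst : Pl.fst = μ := Measure.fst_compProd μ κpi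
  refine le_trans (iInf_le_of_le γ (iInf_le_of_le ‹IsProbabilityMeasure γ›
    (iInf_le_of_le hsupp (iInf_le_of_le hmarg le_rfl)))) ?_
  refine le_trans (iInf_le_of_le Pl (iInf_le_of_le ‹IsProbabilityMeasure Pl›
    (iInf_le_of_le hPlfst (iInf_le_of_le rfl le_rfl)))) ?_
  rw [hcost]

/-- **Lemma 2 of the paper**: the infimum, over probability measures `γ` on `(ℝ^D)^Q`
supported on codeword tuples and with `q`-th coordinate marginal `P_{e,π^q}` for every
`q`, of `W_{f_dz}(T#P, γ)`, is at most the average `(1/Q) ∑ q, W_dist(T^q#P, P_{e,π^q})`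
of the per-coordinate marginal Wasserstein distances (Euclidean distance cost). -/
theorem stmt6 {K Q D n : ℕ}
    (P : Measure (EuclideanSpace ℝ (Fin n))) [IsProbabilityMeasure P]
    (T : EuclideanSpace ℝ (Fin n) → (Fin Q → EuclideanSpace ℝ (Fin D)))
    (hT : Measurable T)
    (e : Fin K → EuclideanSpace ℝ (Fin D)) (w : Fin Q → Fin K → ℝ)
    (hw0 : ∀ q k, 0 ≤ w q k) (hw1 : ∀ q, ∑ k, w q k = 1) :
    (⨅ (γ : Measure (Fin Q → EuclideanSpace ℝ (Fin D)))
       (_ : IsProbabilityMeasure γ)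
       (_ : γ {z | ∀ q, ∃ k, z q = e k} = 1)
       (_ : ∀ q, γ.map (fun z => z q) = codebookMeasure e (w q)),
       Wcost fdz (P.map T) γ)
    ≤ (∑ q, Wcost (fun a b => edist a b)
          (P.map (fun x => T x q)) (codebookMeasure e (w q))) / (Q : ℝ≥0∞) := by
  classical
  by_cases hQ : Q = 0
  · subst hQ
    simpa using key_lemma P T hT e w (fun q => q.elim0) (fun q => q.elim0)
      (fun q => q.elim0) (fun q => q.elim0)
  · set W : Fin Q → ℝ≥0∞ := fun q => Wcost (fun a b => edist a b)
      (P.map (fun x => T x q)) (codebookMeasure e (w q)) with hW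
    by_cases hfin : ∀ q, W q ≠ ⊤
    · refine ENNReal.le_of_forall_pos_le_add fun ε hε hlt => ?_
      have hex : ∀ q : Fin Q, ∃ π : Measure (EuclideanSpace ℝ (Fin D) × EuclideanSpace ℝ (Fin D)),
          IsProbabilityMeasure π ∧ π.fst = P.map (fun x => T x q) ∧
          π.snd = codebookMeasure e (w q) ∧
          ∫⁻ p, edist p.1 p.2 ∂π ≤ W q + ε := by
        intro q
        have hlt2 : W q < W q + ε :=
          ENNReal.lt_add_right (hfin q) (by exact_mod_cast hε.ne')
        rw [hW] at hlt2
        simp only [Wcost, iInf_lt_iff] at hlt2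
        obtain ⟨π, h1, h2, h3, h4⟩ := hlt2
        exact ⟨π, h1, h2, h3, h4.le⟩
      choose π h1 h2 h3 h4 using hex
      refine (key_lemma P T hT e w π h1 h2 h3).trans ?_
      refine (ENNReal.div_le_div_right
        (Finset.sum_le_sum fun q _ => h4 q) ((Q : ℝ≥0∞))).trans ?_
      have hsum : ∑ q : Fin Q, (W q + (ε : ℝ≥0∞)) = (∑ q, W q) + (Q : ℝ≥0∞) * ε := by
        rw [Finset.sum_add_distrib]
        congr 1
        simp [Finset.card_univ, mul_comm]
      rw [hsum, ENNReal.add_div]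
      have hcancel : (Q : ℝ≥0∞) * (ε : ℝ≥0∞) / (Q : ℝ≥0∞) = (ε : ℝ≥0∞) := by
        rw [mul_comm, mul_div_assoc,
          ENNReal.div_self (by exact_mod_cast hQ) (ENNReal.natCast_ne_top Q), mul_one]
      rw [hcancel]
    · push_neg at hfin
      obtain ⟨q, hq⟩ := hfin
      have htop : ∑ q', W q' = ⊤ := by
        exact ENNReal.sum_eq_top.2 ⟨q, Finset.mem_univ q, hq⟩
      rw [htop, ENNReal.top_div_of_ne_top (ENNReal.natCast_ne_top Q)]
      exact le_top
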